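/- Let E ⊆ ℝ^{n+1} satisfy the uniform ball condition with radius r > 0, and let ν_E denote the outer unit normal on ∂E. Then for all x, y ∈ ∂E, ν_E(x)·ν_E(y) ≥ 1 − |x−y|²/(2r²). -/

import Mathlib

/-- `ν` is an outer-unit-normal field of `E` realizing the uniform ball condition with
radius `r`. -/
def UBCNormal {n : ℕ} (E : Set (EuclideanSpace ℝ (Fin (n+1)))) (r : ℝ)
    (ν : EuclideanSpace ℝ (Fin (n+1)) → EuclideanSpace ℝ (Fin (n+1))) : Prop :=
  ∀ x ∈ frontier E, ‖ν x‖ = 1 ∧ Metric.ball (x - r • ν x) r ⊆ E ∧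
    Metric.ball (x + r • ν x) r ⊆ Eᶜ

/-- If `E` satisfies the uniform ball condition with radius `r > 0`, then for all
`x, y ∈ ∂E` one has `ν_E(x)·ν_E(y) ≥ 1 − |x−y|²/(2r²)`. -/
theorem normal_inner_lower_bound {n : ℕ} (E : Set (EuclideanSpace ℝ (Fin (n+1)))) (r : ℝ)
    (hr : 0 < r) (ν : EuclideanSpace ℝ (Fin (n+1)) → EuclideanSpace ℝ (Fin (n+1)))
    (hν : UBCNormal E r ν) :
    ∀ x ∈ frontier E, ∀ y ∈ frontier E,
      (1 : ℝ) - ‖x - y‖ ^ 2 / (2 * r ^ 2) ≤ (inner ℝ (ν x) (ν y) : ℝ) := by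
  intro x hx y hy
  obtain ⟨hnx, hxin, hxout⟩ := hν x hx
  obtain ⟨hny, hyin, hyout⟩ := hν y hy
  have key : ∀ a b : EuclideanSpace ℝ (Fin (n+1)), Metric.ball a r ⊆ E →
      Metric.ball b r ⊆ Eᶜ → 2 * r ≤ dist a b := by
    intro a b ha hb
    by_contra h
    push_neg at h
    have hm : midpoint ℝ a b ∈ Metric.ball a r := by
      rw [Metric.mem_ball, dist_midpoint_left (𝕜 := ℝ)]
      simp only [Real.norm_two]
      linarith
    have hm' : midpoint ℝ a b ∈ Metric.ball b r := by
      rw [Metric.mem_ball, dist_midpoint_right (𝕜 := ℝ)]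
      simp only [Real.norm_two]
      linarith
    exact (hb hm') (ha hm)
  set v := x - y with hv
  set w := r • (ν x + ν y) with hwdef
  have h1 : 2 * r ≤ ‖v + w‖ := by
    have := key _ _ hyin hxout
    rw [dist_eq_norm] at this
    calc 2*r ≤ ‖(y - r • ν y) - (x + r • ν x)‖ := this
      _ = ‖-(v + w)‖ := by rw [hv, hwdef, smul_add]; congr 1; abel
      _ = ‖v + w‖ := norm_neg _
  have h2 : 2 * r ≤ ‖v - w‖ := by
    have := key _ _ hxin hyout
    rw [dist_eq_norm] at this
    calc 2*r ≤ ‖(x - r • ν x) - (y + r • ν y)‖ := this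
      _ = ‖v - w‖ := by rw [hv, hwdef, smul_add]; congr 1; abel
  have hA : ‖v + w‖^2 = ‖v‖^2 + 2 * (inner ℝ v w : ℝ) + ‖w‖^2 := norm_add_sq_real v w
  have hB : ‖v - w‖^2 = ‖v‖^2 - 2 * (inner ℝ v w : ℝ) + ‖w‖^2 := norm_sub_sq_real v w
  have hw : ‖w‖^2 = r^2 * (2 + 2 * (inner ℝ (ν x) (ν y) : ℝ)) := by
    rw [hwdef, norm_smul, mul_pow, norm_add_sq_real, hnx, hny]
    rw [Real.norm_eq_abs, sq_abs]
    ring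
  have e1 : (2*r)^2 ≤ ‖v + w‖^2 := by nlinarith [norm_nonneg (v + w)]
  have e2 : (2*r)^2 ≤ ‖v - w‖^2 := by nlinarith [norm_nonneg (v - w)]
  have h2r : (0:ℝ) < 2 * r^2 := by positivity
  rw [sub_le_iff_le_add, ← sub_le_iff_le_add', le_div_iff₀ h2r]
  nlinarith [e1, e2, hA, hB, hw]
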